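/- Let N be an acyclic n-network in which no node is simultaneously a source and a sink, and let E be a set of arcs of N. Then there exists at most one non-intersecting family of n paths in N whose multiset of steps equals E; moreover, if such a family exists, then every source has out-degree 1 and in-degree 0 in E, every sink has out-degree 0 and in-degree 1 in E, and every other node has degree pair (1,1) or (0,0) in E. -/

import Mathlib

variable {V : Type*}

/-- A (directed) path in the digraph with arc relation `R`, as a nonempty list of
pairwise distinct nodes chained by `R`. -/
def IsPathList (R : V → V → Prop) (l : List V) : Prop :=
  l ≠ [] ∧ l.Chain' R ∧ l.Nodup

/-- `IsFamily R src snk F σ` : `F` is a family of `n` paths, the `i`-th going from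
source `src i` to sink `snk (σ i)`. -/
def IsFamily {n : ℕ} (R : V → V → Prop) (src snk : Fin n → V)
    (F : Fin n → List V) (σ : Equiv.Perm (Fin n)) : Prop :=
  ∀ i, IsPathList R (F i) ∧ (F i).head? = some (src i) ∧
    (F i).getLast? = some (snk (σ i))

/-- A family of paths is non-intersecting when no node belongs to two of its paths. -/
def NonIntersecting {n : ℕ} (F : Fin n → List V) : Prop :=
  ∀ i j, i ≠ j → ∀ v ∈ F i, v ∉ F j

/-- The multiset of steps of a family of paths. -/
def stepsOfFam {n : ℕ} (F : Fin n → List V) : Multiset (V × V) :=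
  ∑ i : Fin n, (((F i).zip (F i).tail : List (V × V)) : Multiset (V × V))

/- ### Auxiliary lemmas -/

lemma zipTail_map_fst (l : List V) : (l.zip l.tail).map Prod.fst = l.dropLast := by
  induction l with
  | nil => rfl
  | cons a t ih =>
    cases t with
    | nil => rfl
    | cons b t' =>
      simp only [List.tail_cons, List.zip_cons_cons, List.map_cons] at *
      rw [ih]
      rfl

lemma zipTail_map_snd (l : List V) : (l.zip l.tail).map Prod.snd = l.tail :=
  List.map_snd_zip (by cases l <;> simp)

lemma countP_fst_ms [DecidableEq V] (s : Multiset (V × V)) (z : V) :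
    s.countP (fun p => p.1 = z) = (s.map Prod.fst).count z := by
  rw [Multiset.count_map, Multiset.countP_eq_card_filter]
  congr 1
  exact Multiset.filter_congr (fun x _ => eq_comm)

lemma countP_snd_ms [DecidableEq V] (s : Multiset (V × V)) (z : V) :
    s.countP (fun p => p.2 = z) = (s.map Prod.snd).count z := by
  rw [Multiset.count_map, Multiset.countP_eq_card_filter]
  congr 1
  exact Multiset.filter_congr (fun x _ => eq_comm)

lemma countP_finsetSum {ι : Type*} (s : Finset ι) (f : ι → Multiset (V × V))
    (p : V × V → Prop) [DecidablePred p] :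
    (∑ i ∈ s, f i).countP p = ∑ i ∈ s, (f i).countP p :=
  map_sum (Multiset.countPAddMonoidHom p) f s

lemma steps_countP_fst [DecidableEq V] {n : ℕ} (F : Fin n → List V) (z : V) :
    (stepsOfFam F).countP (fun p => p.1 = z) = ∑ i, ((F i).dropLast).count z := by
  rw [stepsOfFam, countP_finsetSum]
  refine Finset.sum_congr rfl (fun i _ => ?_)
  rw [countP_fst_ms, Multiset.map_coe, zipTail_map_fst, Multiset.coe_count]

lemma steps_countP_snd [DecidableEq V] {n : ℕ} (F : Fin n → List V) (z : V) :
    (stepsOfFam F).countP (fun p => p.2 = z) = ∑ i, ((F i).tail).count z := by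
  rw [stepsOfFam, countP_finsetSum]
  refine Finset.sum_congr rfl (fun i _ => ?_)
  rw [countP_snd_ms, Multiset.map_coe, zipTail_map_snd, Multiset.coe_count]

lemma mem_dropLast_iff' {l : List V} (hne : l ≠ []) (hnd : l.Nodup) {z : V} :
    z ∈ l.dropLast ↔ z ∈ l ∧ z ≠ l.getLast hne := by
  have h := List.dropLast_append_getLast hne
  constructor
  · intro hz
    refine ⟨by rw [← h]; exact List.mem_append_left _ hz, ?_⟩
    intro hzl
    rw [← h] at hnd
    obtain ⟨-, -, hdisj⟩ := List.nodup_append'.mp hnd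
    exact hdisj hz (by simp [hzl])
  · rintro ⟨hz, hne'⟩
    rw [← h] at hz
    rcases List.mem_append.mp hz with h1 | h1
    · exact h1
    · exact absurd (by simpa using h1) hne'

lemma mem_tail_iff' {l : List V} (hne : l ≠ []) (hnd : l.Nodup) {z : V} :
    z ∈ l.tail ↔ z ∈ l ∧ z ≠ l.head hne := by
  cases l with
  | nil => exact absurd rfl hne
  | cons a t =>
    simp only [List.tail_cons, List.head_cons, List.mem_cons]
    obtain ⟨ha, -⟩ := List.nodup_cons.mp hnd
    constructor
    · intro hz
      exact ⟨Or.inr hz, fun hza => ha (hza ▸ hz)⟩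
    · rintro ⟨hz | hz, hza⟩
      · exact absurd hz hza
      · exact hz

/-- The key degree count lemma. -/
lemma degree_lemma [DecidableEq V] {n : ℕ} (R : V → V → Prop)
    (src snk : Fin n → V) (hdisj : ∀ i j, src i ≠ snk j)
    (F : Fin n → List V) (σ : Equiv.Perm (Fin n))
    (hF : IsFamily R src snk F σ) (hNI : NonIntersecting F) (z : V) :
    ((∃ i, src i = z) →
      (stepsOfFam F).countP (fun p => p.1 = z) = 1 ∧
      (stepsOfFam F).countP (fun p => p.2 = z) = 0) ∧
    ((∃ i, snk i = z) →
      (stepsOfFam F).countP (fun p => p.1 = z) = 0 ∧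
      (stepsOfFam F).countP (fun p => p.2 = z) = 1) ∧
    ((¬ ∃ i, src i = z) → (¬ ∃ i, snk i = z) →
      ((stepsOfFam F).countP (fun p => p.1 = z) = 1 ∧
       (stepsOfFam F).countP (fun p => p.2 = z) = 1) ∨
      ((stepsOfFam F).countP (fun p => p.1 = z) = 0 ∧
       (stepsOfFam F).countP (fun p => p.2 = z) = 0)) := by
  have hne : ∀ i, F i ≠ [] := fun i => (hF i).1.1
  have hnd : ∀ i, (F i).Nodup := fun i => (hF i).1.2.2
  have hhead : ∀ i, (F i).head (hne i) = src i := by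
    intro i
    have h := (hF i).2.1
    rw [List.head?_eq_head (hne i)] at h
    exact Option.some.inj h
  have hlast : ∀ i, (F i).getLast (hne i) = snk (σ i) := by
    intro i
    have h := (hF i).2.2
    rw [List.getLast?_eq_getLast (hne i)] at h
    exact Option.some.inj h
  have hmemsrc : ∀ i, src i ∈ F i := fun i => (hhead i) ▸ List.head_mem (hne i)
  have hmemsnk : ∀ i, snk (σ i) ∈ F i := fun i => (hlast i) ▸ List.getLast_mem (hne i)
  have key1 : ∀ i, ((F i).dropLast).count z
      = if z ∈ F i ∧ z ≠ snk (σ i) then 1 else 0 := by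
    intro i
    by_cases h : z ∈ F i ∧ z ≠ snk (σ i)
    · rw [if_pos h]
      exact List.count_eq_one_of_mem ((List.dropLast_sublist _).nodup (hnd i))
        ((mem_dropLast_iff' (hne i) (hnd i)).mpr ⟨h.1, (hlast i).symm ▸ h.2⟩)
    · rw [if_neg h]
      apply List.count_eq_zero_of_not_mem
      rw [mem_dropLast_iff' (hne i) (hnd i), hlast i]
      exact h
  have key2 : ∀ i, ((F i).tail).count z
      = if z ∈ F i ∧ z ≠ src i then 1 else 0 := by
    intro i
    by_cases h : z ∈ F i ∧ z ≠ src i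
    · rw [if_pos h]
      exact List.count_eq_one_of_mem ((List.tail_sublist _).nodup (hnd i))
        ((mem_tail_iff' (hne i) (hnd i)).mpr ⟨h.1, (hhead i).symm ▸ h.2⟩)
    · rw [if_neg h]
      apply List.count_eq_zero_of_not_mem
      rw [mem_tail_iff' (hne i) (hnd i), hhead i]
      exact h
  have hout : (stepsOfFam F).countP (fun p => p.1 = z)
      = ∑ i, if z ∈ F i ∧ z ≠ snk (σ i) then 1 else 0 := by
    rw [steps_countP_fst]
    exact Finset.sum_congr rfl (fun i _ => key1 i)
  have hin : (stepsOfFam F).countP (fun p => p.2 = z)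
      = ∑ i, if z ∈ F i ∧ z ≠ src i then 1 else 0 := by
    rw [steps_countP_snd]
    exact Finset.sum_congr rfl (fun i _ => key2 i)
  refine ⟨?_, ?_, ?_⟩
  · rintro ⟨i₀, rfl⟩
    constructor
    · rw [hout, Finset.sum_eq_single i₀]
      · exact if_pos ⟨hmemsrc i₀, hdisj i₀ (σ i₀)⟩
      · intro j _ hj
        exact if_neg (fun hc => hNI i₀ j (Ne.symm hj) _ (hmemsrc i₀) hc.1)
      · exact fun h => absurd (Finset.mem_univ i₀) h
    · rw [hin]
      refine Finset.sum_eq_zero (fun j _ => if_neg ?_)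
      rintro ⟨hzj, hzs⟩
      by_cases hji : j = i₀
      · exact hzs (hji ▸ rfl)
      · exact hNI i₀ j (fun h => hji h.symm) _ (hmemsrc i₀) hzj
  · rintro ⟨j₀, rfl⟩
    have hz : snk j₀ ∈ F (σ.symm j₀) := by
      have := hmemsnk (σ.symm j₀)
      rwa [Equiv.apply_symm_apply] at this
    constructor
    · rw [hout]
      refine Finset.sum_eq_zero (fun j _ => if_neg ?_)
      rintro ⟨hzj, hzs⟩
      by_cases hj : j = σ.symm j₀
      · subst hj
        exact hzs (by rw [Equiv.apply_symm_apply])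
      · exact hNI (σ.symm j₀) j (fun h => hj h.symm) _ hz hzj
    · rw [hin, Finset.sum_eq_single (σ.symm j₀)]
      · exact if_pos ⟨hz, (hdisj (σ.symm j₀) j₀).symm⟩
      · intro j _ hj
        exact if_neg (fun hc => hNI (σ.symm j₀) j (Ne.symm hj) _ hz hc.1)
      · exact fun h => absurd (Finset.mem_univ _) h
  · intro hnsrc hnsnk
    by_cases hz : ∃ i, z ∈ F i
    · obtain ⟨i₀, hzi⟩ := hz
      left
      constructor
      · rw [hout, Finset.sum_eq_single i₀]
        · exact if_pos ⟨hzi, fun h => hnsnk ⟨σ i₀, h.symm⟩⟩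
        · intro j _ hj
          exact if_neg (fun hc => hNI i₀ j (Ne.symm hj) _ hzi hc.1)
        · exact fun h => absurd (Finset.mem_univ _) h
      · rw [hin, Finset.sum_eq_single i₀]
        · exact if_pos ⟨hzi, fun h => hnsrc ⟨i₀, h.symm⟩⟩
        · intro j _ hj
          exact if_neg (fun hc => hNI i₀ j (Ne.symm hj) _ hzi hc.1)
        · exact fun h => absurd (Finset.mem_univ _) h
    · right
      push_neg at hz
      constructor
      · rw [hout]
        exact Finset.sum_eq_zero (fun j _ => if_neg (fun hc => hz j hc.1))
      · rw [hin]
        exact Finset.sum_eq_zero (fun j _ => if_neg (fun hc => hz j hc.1))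

/-- In a `Nodup` list, a node has a unique successor along the list. -/
lemma zip_tail_succ_unique : ∀ {l : List V}, l.Nodup → ∀ {z w₁ w₂ : V},
    (z, w₁) ∈ l.zip l.tail → (z, w₂) ∈ l.zip l.tail → w₁ = w₂ := by
  intro l
  induction l with
  | nil => intro _ z w₁ w₂ h₁ _; simp at h₁
  | cons a t ih =>
    intro hnd z w₁ w₂ h₁ h₂
    cases t with
    | nil => simp at h₁
    | cons b t' =>
      simp only [List.tail_cons, List.zip_cons_cons, List.mem_cons] at h₁ h₂
      obtain ⟨ha, hnd'⟩ := List.nodup_cons.mp hnd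
      rcases h₁ with h₁ | h₁ <;> rcases h₂ with h₂ | h₂
      · rw [Prod.mk.injEq] at h₁ h₂
        rw [h₁.2, h₂.2]
      · exfalso
        have hz : z ∈ b :: t' := (List.of_mem_zip (by simpa using h₂)).1
        rw [Prod.mk.injEq] at h₁
        exact ha (h₁.1 ▸ hz)
      · exfalso
        have hz : z ∈ b :: t' := (List.of_mem_zip (by simpa using h₁)).1
        rw [Prod.mk.injEq] at h₂
        exact ha (h₂.1 ▸ hz)
      · exact ih hnd' (by simpa using h₁) (by simpa using h₂)

/-- Each node has a unique successor in the steps of a non-intersecting family. -/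
lemma steps_succ_unique {n : ℕ} {F : Fin n → List V} (hNI : NonIntersecting F)
    (hnd : ∀ i, (F i).Nodup) {z w₁ w₂ : V}
    (h₁ : (z, w₁) ∈ stepsOfFam F) (h₂ : (z, w₂) ∈ stepsOfFam F) : w₁ = w₂ := by
  rw [stepsOfFam, Multiset.mem_sum] at h₁ h₂
  obtain ⟨i₁, -, m₁⟩ := h₁
  obtain ⟨i₂, -, m₂⟩ := h₂
  rw [Multiset.mem_coe] at m₁ m₂
  have hz₁ : z ∈ F i₁ := (List.of_mem_zip m₁).1
  have hz₂ : z ∈ F i₂ := (List.of_mem_zip m₂).1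
  have : i₁ = i₂ := by
    by_contra h
    exact hNI i₁ i₂ h _ hz₁ hz₂
  subst this
  exact zip_tail_succ_unique (hnd i₁) m₁ m₂

/-- Two chains in `E` with the same head, whose last nodes have no outgoing arc,
are equal, provided successors in `E` are unique. -/
lemma chain_eq (E : Multiset (V × V))
    (huniq : ∀ z w₁ w₂, (z, w₁) ∈ E → (z, w₂) ∈ E → w₁ = w₂) :
    ∀ (l₁ l₂ : List V),
      (∀ p ∈ l₁.zip l₁.tail, p ∈ E) → (∀ p ∈ l₂.zip l₂.tail, p ∈ E) →
      l₁.head? = l₂.head? →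
      (∀ z, l₁.getLast? = some z → ∀ w, (z, w) ∉ E) →
      (∀ z, l₂.getLast? = some z → ∀ w, (z, w) ∉ E) →
      l₁ = l₂ := by
  intro l₁
  induction l₁ with
  | nil =>
    intro l₂ _ _ hh _ _
    cases l₂ with
    | nil => rfl
    | cons a t => simp at hh
  | cons a t₁ ih =>
    intro l₂ hs₁ hs₂ hh hl₁ hl₂
    cases l₂ with
    | nil => simp at hh
    | cons a' t₂ =>
      simp only [List.head?_cons, Option.some.injEq] at hh
      subst hh
      cases t₁ with
      | nil =>
        cases t₂ with
        | nil => rfl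
        | cons b t₂' =>
          exfalso
          exact hl₁ a (by simp) b (hs₂ (a, b) (by simp [List.zip_cons_cons]))
      | cons b t₁' =>
        cases t₂ with
        | nil =>
          exfalso
          exact hl₂ a (by simp) b (hs₁ (a, b) (by simp [List.zip_cons_cons]))
        | cons c t₂' =>
          have hab : (a, b) ∈ E := hs₁ _ (by simp [List.zip_cons_cons])
          have hac : (a, c) ∈ E := hs₂ _ (by simp [List.zip_cons_cons])
          have hbc : b = c := huniq a b c hab hac
          subst hbc
          have ht : (b :: t₁') = (b :: t₂') := by
            apply ih (b :: t₂')
            · intro p hp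
              exact hs₁ p (by simp only [List.tail_cons, List.zip_cons_cons,
                List.mem_cons]; exact Or.inr (by simpa using hp))
            · intro p hp
              exact hs₂ p (by simp only [List.tail_cons, List.zip_cons_cons,
                List.mem_cons]; exact Or.inr (by simpa using hp))
            · rfl
            · intro z hz
              exact hl₁ z (by rwa [List.getLast?_cons_cons])
            · intro z hz
              exact hl₂ z (by rwa [List.getLast?_cons_cons])
          rw [ht]

/-- In an acyclic `n`-network in which no node is both a source and a sink, at most one
non-intersecting family of `n` paths has a given multiset of steps `E`; and for such a
family, every source has degree pair `(1,0)` in `E`, every sink `(0,1)`, and every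
other node `(1,1)` or `(0,0)`. -/
theorem nonintersecting_family_unique_steps [Fintype V] [DecidableEq V] {n : ℕ}
    (R : V → V → Prop)
    (hacyc : ∀ (x : V) (l : List V), l ≠ [] → List.Chain R x l → l.getLast? ≠ some x)
    (src snk : Fin n → V)
    (hsrc : Function.Injective src) (hsnk : Function.Injective snk)
    (hdisj : ∀ i j, src i ≠ snk j)
    (E : Multiset (V × V)) :
    (∀ (F₁ F₂ : Fin n → List V) (σ₁ σ₂ : Equiv.Perm (Fin n)),
        IsFamily R src snk F₁ σ₁ → NonIntersecting F₁ → stepsOfFam F₁ = E →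
        IsFamily R src snk F₂ σ₂ → NonIntersecting F₂ → stepsOfFam F₂ = E →
        F₁ = F₂) ∧
    (∀ (F : Fin n → List V) (σ : Equiv.Perm (Fin n)),
        IsFamily R src snk F σ → NonIntersecting F → stepsOfFam F = E →
        ∀ z : V,
          ((∃ i, src i = z) →
            E.countP (fun p => p.1 = z) = 1 ∧ E.countP (fun p => p.2 = z) = 0) ∧
          ((∃ i, snk i = z) →
            E.countP (fun p => p.1 = z) = 0 ∧ E.countP (fun p => p.2 = z) = 1) ∧
          ((¬ ∃ i, src i = z) → (¬ ∃ i, snk i = z) →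
            (E.countP (fun p => p.1 = z) = 1 ∧ E.countP (fun p => p.2 = z) = 1) ∨
            (E.countP (fun p => p.1 = z) = 0 ∧ E.countP (fun p => p.2 = z) = 0))) := by
  constructor
  · intro F₁ F₂ σ₁ σ₂ h₁ hNI₁ hE₁ h₂ hNI₂ hE₂
    subst hE₁
    -- successor uniqueness in E
    have huniq : ∀ z w₁ w₂, (z, w₁) ∈ stepsOfFam F₁ → (z, w₂) ∈ stepsOfFam F₁ →
        w₁ = w₂ :=
      fun z w₁ w₂ hw₁ hw₂ =>
        steps_succ_unique hNI₁ (fun i => (h₁ i).1.2.2) hw₁ hw₂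
    -- sinks have no outgoing arcs in E
    have hsink : ∀ j w, (snk j, w) ∉ stepsOfFam F₁ := by
      intro j w hw
      have hd := (degree_lemma R src snk hdisj F₁ σ₁ h₁ hNI₁ (snk j)).2.1 ⟨j, rfl⟩
      have := Multiset.countP_eq_zero.mp hd.1 _ hw
      exact this rfl
    funext i
    apply chain_eq (stepsOfFam F₁) huniq
    · intro p hp
      rw [stepsOfFam, Multiset.mem_sum]
      exact ⟨i, Finset.mem_univ i, Multiset.mem_coe.mpr hp⟩
    · intro p hp
      rw [← hE₂, stepsOfFam, Multiset.mem_sum]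
      exact ⟨i, Finset.mem_univ i, Multiset.mem_coe.mpr hp⟩
    · rw [(h₁ i).2.1, (h₂ i).2.1]
    · intro z hz w
      rw [(h₁ i).2.2] at hz
      exact (Option.some.inj hz) ▸ hsink (σ₁ i) w
    · intro z hz w
      rw [(h₂ i).2.2] at hz
      exact (Option.some.inj hz) ▸ hsink (σ₂ i) w
  · intro F σ hF hNI hE z
    rw [← hE]
    exact degree_lemma R src snk hdisj F σ hF hNI z
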